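/- For every integer g ≥ 2, the following identity holds in the polynomial ring ℤ[q, t]: ( ∑_{(p,l,r,s,h) ∈ ℕ⁵ with 2p + l + r + s + h = g − 1} 2^h · binom(g, h) · binom(g − h, p) · q^{2r + 2s + 2h + 4p} · t^{2s + h + 2p} · (1 + q^{4l} t^{2l} − δ_{l,0}) ) · (1 − q²)(1 − q² t²) = (1 + q² t)^{2g} − q^{2g} (1 + t)^{2g}, where δ_{l,0} = 1 if l = 0 and δ_{l,0} = 0 otherwise, and binom denotes the binomial coefficient. -/

import Mathlib

/-!
Statement 3: the combinatorial identity at the heart of Theorem 0.2 of the paper, in `ℤ[q, t]`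
(modelled as `MvPolynomial (Fin 2) ℤ`, `q = X 0`, `t = X 1`).  Since every solution of
`2p + l + r + s + h = g − 1` in natural numbers satisfies `p, l, r, s, h < g`, the sum is taken
over quintuples `(p, l, r, s, h)` in `{0, …, g−1}⁵` with `2p + l + r + s + h = g − 1`.
-/

open MvPolynomial

noncomputable section

namespace Stmt3Aux
open Finset

variable {R : Type*} [CommRing R] {M : Type*} [AddCommMonoid M]

/-- Partition `∑_{p=0}^n v p` into `2p < n` (paired with its reflection) and the diagonal. -/
lemma sym_partition (n : ℕ) (v : ℕ → M) :
    ∑ p ∈ range (n+1), v p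
      = ∑ p ∈ (range (n+1)).filter (fun p => 2*p < n), (v p + v (n - p))
        + (if 2*(n/2) = n then v (n/2) else 0) := by
  classical
  have h1 : ((range (n+1)).filter (fun p => ¬ 2*p < n)).filter (fun p => 2*p = n)
      = if 2*(n/2) = n then {n/2} else ∅ := by
    split_ifs with hc
    · ext x; simp only [mem_filter, mem_range, mem_singleton]; omega
    · ext x; simp only [mem_filter, mem_range, notMem_empty, iff_false, not_and]; omega
  have h2 : ∑ p ∈ ((range (n+1)).filter (fun p => ¬ 2*p < n)).filter
        (fun p => ¬ 2*p = n), v p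
      = ∑ p ∈ (range (n+1)).filter (fun p => 2*p < n), v (n - p) := by
    refine sum_nbij' (fun p => n - p) (fun p => n - p) ?_ ?_ ?_ ?_ ?_
    · intro p hp; simp only [mem_filter, mem_range] at *; omega
    · intro p hp; simp only [mem_filter, mem_range] at *; omega
    · intro p hp; simp only [mem_filter, mem_range] at hp; omega
    · intro p hp; simp only [mem_filter, mem_range] at hp; omega
    · intro p hp
      simp only [mem_filter, mem_range] at hp
      congr 1
      omega
  have key : ∑ p ∈ (range (n+1)).filter (fun p => ¬ 2*p < n), v p
      = (if 2*(n/2) = n then v (n/2) else 0)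
        + ∑ p ∈ (range (n+1)).filter (fun p => 2*p < n), v (n - p) := by
    rw [← sum_filter_add_sum_filter_not ((range (n+1)).filter (fun p => ¬ 2*p < n))
        (fun p => 2*p = n) v, h2, h1]
    congr 1
    split_ifs <;> simp
  rw [← sum_filter_add_sum_filter_not (range (n+1)) (fun p => 2*p < n) v, key,
    sum_add_distrib]
  abel

theorem collapse (N c : ℕ) (f : ℕ → M) (P : ℕ → Prop) [DecidablePred P]
    (hP : ∀ s, P s ↔ c + s = N) :
    (∑ s ∈ range (N+1), if P s then f s else 0) = if c ≤ N then f (N - c) else 0 := by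
  classical
  split_ifs with hc
  · rw [Finset.sum_eq_single (N - c)]
    · rw [if_pos ((hP _).mpr (by omega))]
    · intro s _ hs
      rw [if_neg (fun h => hs (by have := (hP s).mp h; omega))]
    · intro hb; exact absurd (mem_range.mpr (by omega)) hb
  · refine Finset.sum_eq_zero fun s _ => ?_
    rw [if_neg (fun h => hc (by have := (hP s).mp h; omega))]

theorem reindex (N : ℕ) (f : ℕ → ℕ → ℕ → ℕ → ℕ → M) :
    ∑ v ∈ (range (N+1) ×ˢ range (N+1) ×ˢ range (N+1) ×ˢ range (N+1) ×ˢ range (N+1)).filter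
        (fun v => 2*v.1 + v.2.1 + v.2.2.1 + v.2.2.2.1 + v.2.2.2.2 = N),
      f v.1 v.2.1 v.2.2.1 v.2.2.2.1 v.2.2.2.2
    = ∑ h ∈ range (N+1), ∑ p ∈ range (N+1),
        if h + 2*p ≤ N then
          ∑ l ∈ range (N-h-2*p+1), ∑ r ∈ range (N-h-2*p-l+1), f p l r (N-h-2*p-l-r) h
        else 0 := by
  classical
  rw [sum_filter]
  simp only [Finset.sum_product]
  -- swap s and h (innermost two)
  have step1 : ∀ p l r : ℕ,
      (∑ s ∈ range (N+1), ∑ h ∈ range (N+1),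
        if 2*p + l + r + s + h = N then f p l r s h else 0)
      = ∑ h ∈ range (N+1),
          (if 2*p + l + r + h ≤ N then f p l r (N - (2*p + l + r + h)) h else 0) := by
    intro p l r
    rw [Finset.sum_comm]
    refine sum_congr rfl fun h _ => ?_
    exact collapse N (2*p + l + r + h) (fun s => f p l r s h) _ (fun s => by omega)
  simp only [step1]
  -- reorder p l r h -> h p l r
  have swap1 : ∀ p l : ℕ,
      (∑ r ∈ range (N+1), ∑ h ∈ range (N+1),
        if 2*p + l + r + h ≤ N then f p l r (N - (2*p + l + r + h)) h else 0)
      = ∑ h ∈ range (N+1), ∑ r ∈ range (N+1),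
        if 2*p + l + r + h ≤ N then f p l r (N - (2*p + l + r + h)) h else 0 :=
    fun p l => Finset.sum_comm
  simp only [swap1]
  have swap2 : ∀ p : ℕ,
      (∑ l ∈ range (N+1), ∑ h ∈ range (N+1), ∑ r ∈ range (N+1),
        if 2*p + l + r + h ≤ N then f p l r (N - (2*p + l + r + h)) h else 0)
      = ∑ h ∈ range (N+1), ∑ l ∈ range (N+1), ∑ r ∈ range (N+1),
        if 2*p + l + r + h ≤ N then f p l r (N - (2*p + l + r + h)) h else 0 :=
    fun p => Finset.sum_comm
  simp only [swap2]
  rw [Finset.sum_comm]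
  -- now fixed h, p : inner double sums
  refine sum_congr rfl fun h hh => ?_
  refine sum_congr rfl fun p hp => ?_
  by_cases hcond : h + 2*p ≤ N
  · rw [if_pos hcond]
    rw [← sum_subset (s₁ := range (N-h-2*p+1)) (by intro x hx; simp only [mem_range] at *; omega)
      (fun l _ hl => ?_)]
    · refine sum_congr rfl fun l hl => ?_
      simp only [mem_range] at hl
      rw [← sum_subset (s₁ := range (N-h-2*p-l+1))
        (by intro x hx; simp only [mem_range] at *; omega) (fun r _ hr => ?_)]
      · refine sum_congr rfl fun r hr => ?_
        simp only [mem_range] at hr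
        rw [if_pos (by omega), show N - (2*p + l + r + h) = N-h-2*p-l-r from by omega]
      · simp only [mem_range] at *
        rw [if_neg (by omega)]
    · simp only [mem_range] at hl
      refine Finset.sum_eq_zero fun r hr => ?_
      simp only [mem_range] at hr
      rw [if_neg (by omega)]
  · rw [if_neg hcond]
    refine Finset.sum_eq_zero fun l _ => Finset.sum_eq_zero fun r _ => ?_
    rw [if_neg (by omega)]

/-- `hh a b n = ∑_{r+s=n} a^r b^s`. -/
def hh (a b : R) (n : ℕ) : R := ∑ r ∈ range (n+1), a^r * b^(n-r)

def SS (a : R) (m : ℕ) : R := ∑ i ∈ range (m+1), a^i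

def PP (a b : R) (m : ℕ) : R := ∑ l ∈ range (m+1), hh a b (m-l)

def QQ (a b : R) (m : ℕ) : R := ∑ l ∈ range (m+1), (a*b)^l * hh a b (m-l)

def FF (a b : R) (m : ℕ) : R :=
  ∑ l ∈ range (m+1), (1 + (a*b)^l - if l = 0 then 1 else 0) * hh a b (m-l)

lemma hh_succ (a b : R) (n : ℕ) : hh a b (n+1) = a^(n+1) + b * hh a b n := by
  rw [hh, sum_range_succ, Nat.sub_self, pow_zero, mul_one, hh, mul_sum]
  rw [add_comm]
  congr 1
  refine sum_congr rfl fun r hr => ?_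
  rw [mem_range] at hr
  have : n + 1 - r = (n - r) + 1 := by omega
  rw [this, pow_succ]
  ring

lemma hh_succ' (a b : R) (n : ℕ) : hh a b (n+1) = b^(n+1) + a * hh a b n := by
  rw [hh, sum_range_succ', pow_zero, one_mul, Nat.sub_zero, hh, mul_sum]
  rw [add_comm]
  congr 1
  refine sum_congr rfl fun r hr => ?_
  have : n + 1 - (r+1) = n - r := by omega
  rw [this, pow_succ]
  ring

lemma hh_two (a b : R) (n : ℕ) : hh a b (n+2) = a^(n+2) + b^(n+2) + a*b*hh a b n := by
  rw [hh_succ, hh_succ']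
  ring

lemma SS_succ (a : R) (m : ℕ) : SS a (m+1) = 1 + a * SS a m := by
  rw [SS, sum_range_succ', pow_zero, SS, mul_sum]
  rw [add_comm]
  congr 1
  refine sum_congr rfl fun r _ => (pow_succ' a r).symm ▸ rfl

lemma SS_mul (a : R) (m : ℕ) : SS a m * (a - 1) = a^(m+1) - 1 := by
  rw [SS, geom_sum_mul]

lemma PP_succ (a b : R) (m : ℕ) : PP a b (m+1) = PP a b m + hh a b (m+1) := by
  rw [PP, sum_range_succ', PP]
  simp only [Nat.succ_sub_succ_eq_sub, Nat.sub_zero]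

lemma PP_iden (a b : R) (m : ℕ) :
    (1 - a*b) * PP a b (m+1)
      = SS a (m+1) + SS b (m+1) - 1 - a*b*hh a b m - a*b*hh a b (m+1) := by
  induction m with
  | zero => simp [PP, hh, SS, sum_range_succ]; ring
  | succ k ih =>
      linear_combination (1-a*b)*PP_succ a b (k+1) + ih - SS_succ a (k+1) - SS_succ b (k+1)
        - SS_mul a (k+1) - SS_mul b (k+1) + hh_two a b k

lemma FF_split (a b : R) (m : ℕ) : FF a b m = PP a b m + QQ a b m - hh a b m := by
  rw [FF, PP, QQ]
  have : ∀ l ∈ range (m+1),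
      (1 + (a*b)^l - if l = 0 then 1 else 0) * hh a b (m-l)
        = hh a b (m-l) + (a*b)^l * hh a b (m-l)
          - (if l = 0 then hh a b m else 0) := by
    intro l _
    split_ifs with hl
    · subst hl; simp
    · ring
  rw [sum_congr rfl this, sum_sub_distrib, sum_add_distrib, sum_ite_eq' (range (m+1)) 0]
  simp

lemma FF_succ (a b : R) (m : ℕ) :
    FF a b (m+1) = hh a b (m+1) + PP a b m + a*b * QQ a b m := by
  rw [FF, sum_range_succ']
  simp only [Nat.succ_sub_succ_eq_sub, Nat.sub_zero, Nat.succ_ne_zero, if_false, if_pos rfl]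
  have : ∀ l ∈ range (m+1),
      (1 + (a*b)^(l+1) - 0) * hh a b (m-l)
        = hh a b (m-l) + (a*b) * ((a*b)^l * hh a b (m-l)) := by
    intro l _; rw [pow_succ]; ring
  rw [sum_congr rfl this, sum_add_distrib, ← mul_sum, PP, QQ]
  norm_num
  ring

lemma FF_eq (a b : R) (m : ℕ) : FF a b m = SS a m * SS b m := by
  induction m with
  | zero => simp [FF, hh, SS]
  | succ k ih =>
      rcases k with _ | k
      · simp [FF, hh, SS, sum_range_succ]; ring
      · have hq : a*b*QQ a b (k+1)
            = a*b*(FF a b (k+1) - PP a b (k+1) + hh a b (k+1)) := by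
          rw [FF_split]; ring
        rw [FF_succ, hq, ih]
        linear_combination PP_iden a b k + hh_two a b k - SS_mul a (k+1) - SS_mul b (k+1)
          - SS b (k+1+1) * SS_succ a (k+1) - (1 + a * SS a (k+1)) * SS_succ b (k+1)

lemma FF_mul (a b : R) (m : ℕ) :
    FF a b m * ((1 - a) * (1 - b)) = (1 - a^(m+1)) * (1 - b^(m+1)) := by
  rw [FF_eq]
  linear_combination (-(SS b m)*(1-b)) * SS_mul a m - (1-a^(m+1)) * SS_mul b m

def coef (g h p : ℕ) : R := (2:R)^h * (g.choose h : R) * ((g-h).choose p : R)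

lemma expand1 (x : R) (g : ℕ) :
    (1 + x)^(2*g) = ∑ h ∈ range (g+1), ∑ p ∈ range (g-h+1),
      (coef g h p : R) * x^(h + 2*p) := by
  have h0 : (1 + x)^(2*g) = (2*x + (x^2 + 1))^g := by
    rw [pow_mul]; congr 1; ring
  rw [h0, add_pow]
  refine sum_congr rfl fun h _ => ?_
  rw [add_pow, mul_sum, sum_mul]
  refine sum_congr rfl fun p _ => ?_
  rw [coef]
  push_cast
  ring

lemma expand2 (u a b : R) (g : ℕ) :
    (2*u + (a + b))^g = ∑ h ∈ range (g+1), ∑ p ∈ range (g-h+1),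
      (coef g h p : R) * (u^h * (a^p * b^(g-h-p))) := by
  rw [add_pow]
  refine sum_congr rfl fun h _ => ?_
  rw [add_pow, mul_sum, sum_mul]
  refine sum_congr rfl fun p _ => ?_
  rw [coef]
  push_cast
  ring

def Mdiag (q t : R) (g : ℕ) : R :=
  ∑ h ∈ range (g+1),
    (if 2*((g-h)/2) = g-h then (coef g h ((g-h)/2) : R) * (q^2*t)^g else 0)

lemma Mdiag_def (q t : R) (g : ℕ) : Mdiag q t g =
    ∑ h ∈ range (g+1),
      (if 2*((g-h)/2) = g-h then (coef g h ((g-h)/2) : R) * (q^2*t)^g else 0) := rfl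

lemma claimA (q t : R) (g : ℕ) :
    ∑ h ∈ range (g+1), ∑ p ∈ range (g+1),
      (if h + 2*p < g then
        (coef g h p : R) * ((q^2*t)^(h+2*p) + (q^2*t)^(2*g-(h+2*p))) else 0)
    = (1+q^2*t)^(2*g) - Mdiag q t g := by
  classical
  have main : ∀ h ∈ range (g+1),
      (∑ p ∈ range (g-h+1), (coef g h p : R) * (q^2*t)^(h+2*p))
      = (∑ p ∈ range (g+1), if h + 2*p < g then
            (coef g h p : R) * ((q^2*t)^(h+2*p) + (q^2*t)^(2*g-(h+2*p))) else 0)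
        + (if 2*((g-h)/2) = g-h then (coef g h ((g-h)/2) : R) * (q^2*t)^g else 0) := by
    intro h hh
    rw [mem_range] at hh
    have hle : h ≤ g := by omega
    rw [sym_partition (g-h) (fun p => (coef g h p : R) * (q^2*t)^(h+2*p))]
    congr 1
    · rw [← sum_filter]
      have hset : (range (g+1)).filter (fun p => h + 2*p < g)
          = (range (g-h+1)).filter (fun p => 2*p < g-h) := by
        ext x; simp only [mem_filter, mem_range]; omega
      rw [hset]
      refine sum_congr rfl fun p hp => ?_
      simp only [mem_filter, mem_range] at hp
      have hcs : (g-h).choose ((g-h) - p) = (g-h).choose p := Nat.choose_symm (by omega)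
      simp only [coef, hcs]
      rw [show h + 2*((g-h) - p) = 2*g - (h+2*p) from by omega]
      ring
    · split_ifs with hc
      · rw [show h + 2*((g-h)/2) = g from by omega]
      · rfl
  have e1 := expand1 (q^2*t) g
  rw [sum_congr rfl main, sum_add_distrib] at e1
  rw [eq_sub_iff_add_eq, Mdiag_def, ← e1]

lemma claimB (q t : R) (g : ℕ) :
    ∑ h ∈ range (g+1), ∑ p ∈ range (g+1),
      (if h + 2*p < g then
        (coef g h p : R) * ((q^2*t)^(h+2*p) * (q^2)^(g-(h+2*p))
          + (q^2*t)^(h+2*p) * (q^2*t^2)^(g-(h+2*p))) else 0)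
    = (2*(q^2*t) + (q^2 + q^2*t^2))^g - Mdiag q t g := by
  classical
  have main : ∀ h ∈ range (g+1),
      (∑ p ∈ range (g-h+1), (coef g h p : R) * ((q^2*t)^h * ((q^2)^p * (q^2*t^2)^(g-h-p))))
      = (∑ p ∈ range (g+1), if h + 2*p < g then
            (coef g h p : R) * ((q^2*t)^(h+2*p) * (q^2)^(g-(h+2*p))
              + (q^2*t)^(h+2*p) * (q^2*t^2)^(g-(h+2*p))) else 0)
        + (if 2*((g-h)/2) = g-h then (coef g h ((g-h)/2) : R) * (q^2*t)^g else 0) := by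
    intro h hh
    rw [mem_range] at hh
    have hle : h ≤ g := by omega
    rw [sym_partition (g-h)
      (fun p => (coef g h p : R) * ((q^2*t)^h * ((q^2)^p * (q^2*t^2)^(g-h-p))))]
    congr 1
    · rw [← sum_filter]
      have hset : (range (g+1)).filter (fun p => h + 2*p < g)
          = (range (g-h+1)).filter (fun p => 2*p < g-h) := by
        ext x; simp only [mem_filter, mem_range]; omega
      rw [hset]
      refine sum_congr rfl fun p hp => ?_
      simp only [mem_filter, mem_range] at hp
      obtain ⟨d, hd⟩ : ∃ d, g = h + 2*p + d := ⟨g - h - 2*p, by omega⟩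
      have hcs : (g-h).choose ((g-h) - p) = (g-h).choose p := Nat.choose_symm (by omega)
      simp only [coef, hcs]
      rw [show (g-h) - p = p + d from by omega, show (g-h) - (p+d) = p from by omega,
        show g - (h+2*p) = d from by omega]
      ring
    · split_ifs with hc
      · generalize hw : (g-h)/2 = w at hc ⊢
        rw [show g - h - w = w from by omega]
        rw [show g = h + 2*w from by omega]
        ring
      · rfl
  have e2 := expand2 (q^2*t) (q^2) (q^2*t^2) g
  rw [sum_congr rfl main, sum_add_distrib] at e2
  rw [eq_sub_iff_add_eq, Mdiag_def, ← e2]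

theorem key (q t : R) (N : ℕ) :
    (∑ h ∈ range (N+1), ∑ p ∈ range (N+1), (if h + 2*p ≤ N then
        (coef (N+1) h p : R) * (q^2*t)^(h+2*p) * FF (q^2) (q^2*t^2) (N-h-2*p) else 0))
      * ((1 - q^2) * (1 - q^2*t^2))
    = (1+q^2*t)^(2*(N+1)) - q^(2*(N+1))*(1+t)^(2*(N+1)) := by
  classical
  rw [sum_mul]
  have step : ∀ h ∈ range (N+1), (∑ p ∈ range (N+1), (if h + 2*p ≤ N then
        (coef (N+1) h p : R) * (q^2*t)^(h+2*p) * FF (q^2) (q^2*t^2) (N-h-2*p) else 0))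
      * ((1 - q^2) * (1 - q^2*t^2))
      = (∑ p ∈ range (N+1), (if h + 2*p ≤ N then
          (coef (N+1) h p : R) * ((q^2*t)^(h+2*p) + (q^2*t)^(2*(N+1)-(h+2*p))) else 0))
        - (∑ p ∈ range (N+1), (if h + 2*p ≤ N then
          (coef (N+1) h p : R) * ((q^2*t)^(h+2*p) * (q^2)^((N+1)-(h+2*p))
            + (q^2*t)^(h+2*p) * (q^2*t^2)^((N+1)-(h+2*p))) else 0)) := by
    intro h _
    rw [sum_mul, ← sum_sub_distrib]
    refine sum_congr rfl fun p _ => ?_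
    split_ifs with hc
    · obtain ⟨d, hd⟩ : ∃ d, N = (h + 2*p) + d := ⟨N - (h+2*p), by omega⟩
      have hm : N - h - 2*p = d := by omega
      rw [hm, mul_assoc, FF_mul,
        show (N+1) - (h+2*p) = d+1 from by omega,
        show 2*(N+1) - (h+2*p) = (h+2*p) + 2*(d+1) from by omega]
      ring
    · simp
  rw [sum_congr rfl step, sum_sub_distrib]
  have extA : ∑ h ∈ range (N+1+1), ∑ p ∈ range (N+1+1),
        (if h + 2*p < N+1 then
          (coef (N+1) h p : R) * ((q^2*t)^(h+2*p) + (q^2*t)^(2*(N+1)-(h+2*p))) else 0)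
      = ∑ h ∈ range (N+1), ∑ p ∈ range (N+1),
        (if h + 2*p ≤ N then
          (coef (N+1) h p : R) * ((q^2*t)^(h+2*p) + (q^2*t)^(2*(N+1)-(h+2*p))) else 0) := by
    rw [sum_range_succ]
    rw [Finset.sum_eq_zero (fun p _ => if_neg (by omega)), add_zero]
    refine sum_congr rfl fun h hhm => ?_
    rw [sum_range_succ, if_neg (by omega), add_zero]
    exact sum_congr rfl fun p _ => if_congr (by omega) rfl rfl
  have extB : ∑ h ∈ range (N+1+1), ∑ p ∈ range (N+1+1),
        (if h + 2*p < N+1 then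
          (coef (N+1) h p : R) * ((q^2*t)^(h+2*p) * (q^2)^((N+1)-(h+2*p))
            + (q^2*t)^(h+2*p) * (q^2*t^2)^((N+1)-(h+2*p))) else 0)
      = ∑ h ∈ range (N+1), ∑ p ∈ range (N+1),
        (if h + 2*p ≤ N then
          (coef (N+1) h p : R) * ((q^2*t)^(h+2*p) * (q^2)^((N+1)-(h+2*p))
            + (q^2*t)^(h+2*p) * (q^2*t^2)^((N+1)-(h+2*p))) else 0) := by
    rw [sum_range_succ]
    rw [Finset.sum_eq_zero (fun p _ => if_neg (by omega)), add_zero]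
    refine sum_congr rfl fun h hhm => ?_
    rw [sum_range_succ, if_neg (by omega), add_zero]
    exact sum_congr rfl fun p _ => if_congr (by omega) rfl rfl
  have hA := claimA q t (N+1)
  have hB := claimB q t (N+1)
  rw [extA] at hA
  rw [extB] at hB
  have e3 : (2*(q^2*t) + (q^2 + q^2*t^2))^(N+1) = q^(2*(N+1))*(1+t)^(2*(N+1)) := by
    rw [show (2*(q^2*t) + (q^2 + q^2*t^2)) = q^2*(1+t)^2 from by ring, mul_pow,
      ← pow_mul, ← pow_mul]
  rw [hA, hB, e3]
  ring

end Stmt3Aux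


theorem stmt3 (g : ℕ) (hg : 2 ≤ g) :
    (∑ v ∈ (Finset.range g ×ˢ Finset.range g ×ˢ Finset.range g ×ˢ Finset.range g ×ˢ
          Finset.range g).filter
        (fun v => 2 * v.1 + v.2.1 + v.2.2.1 + v.2.2.2.1 + v.2.2.2.2 = g - 1),
        (2 : MvPolynomial (Fin 2) ℤ) ^ v.2.2.2.2 *
          (g.choose v.2.2.2.2 : MvPolynomial (Fin 2) ℤ) *
          ((g - v.2.2.2.2).choose v.1 : MvPolynomial (Fin 2) ℤ) *
          (X 0 : MvPolynomial (Fin 2) ℤ) ^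
            (2 * v.2.2.1 + 2 * v.2.2.2.1 + 2 * v.2.2.2.2 + 4 * v.1) *
          (X 1 : MvPolynomial (Fin 2) ℤ) ^ (2 * v.2.2.2.1 + v.2.2.2.2 + 2 * v.1) *
          (1 + (X 0 : MvPolynomial (Fin 2) ℤ) ^ (4 * v.2.1) *
              (X 1 : MvPolynomial (Fin 2) ℤ) ^ (2 * v.2.1) -
            if v.2.1 = 0 then 1 else 0)) *
      ((1 - (X 0 : MvPolynomial (Fin 2) ℤ) ^ 2) *
        (1 - (X 0 : MvPolynomial (Fin 2) ℤ) ^ 2 * (X 1 : MvPolynomial (Fin 2) ℤ) ^ 2)) =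
    (1 + (X 0 : MvPolynomial (Fin 2) ℤ) ^ 2 * (X 1 : MvPolynomial (Fin 2) ℤ)) ^ (2 * g) -
      (X 0 : MvPolynomial (Fin 2) ℤ) ^ (2 * g) *
        (1 + (X 1 : MvPolynomial (Fin 2) ℤ)) ^ (2 * g) := by
  classical
  obtain ⟨N, rfl⟩ : ∃ N, g = N + 1 := ⟨g - 1, by omega⟩
  simp only [Nat.add_sub_cancel]
  have hre := Stmt3Aux.reindex N (fun p l r s h =>
    (2 : MvPolynomial (Fin 2) ℤ)^h * ((N+1).choose h : MvPolynomial (Fin 2) ℤ) *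
      (((N+1) - h).choose p : MvPolynomial (Fin 2) ℤ) *
      (X 0 : MvPolynomial (Fin 2) ℤ)^(2*r + 2*s + 2*h + 4*p) *
      (X 1 : MvPolynomial (Fin 2) ℤ)^(2*s + h + 2*p) *
      (1 + (X 0 : MvPolynomial (Fin 2) ℤ)^(4*l) * (X 1 : MvPolynomial (Fin 2) ℤ)^(2*l) -
        if l = 0 then 1 else 0))
  rw [hre]
  have inner : ∀ h p : ℕ, h + 2*p ≤ N →
      (∑ l ∈ Finset.range (N-h-2*p+1), ∑ r ∈ Finset.range (N-h-2*p-l+1),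
        (2 : MvPolynomial (Fin 2) ℤ)^h * ((N+1).choose h : MvPolynomial (Fin 2) ℤ) *
          (((N+1) - h).choose p : MvPolynomial (Fin 2) ℤ) *
          (X 0 : MvPolynomial (Fin 2) ℤ)^(2*r + 2*(N-h-2*p-l-r) + 2*h + 4*p) *
          (X 1 : MvPolynomial (Fin 2) ℤ)^(2*(N-h-2*p-l-r) + h + 2*p) *
          (1 + (X 0 : MvPolynomial (Fin 2) ℤ)^(4*l) * (X 1 : MvPolynomial (Fin 2) ℤ)^(2*l) -
            if l = 0 then 1 else 0))
      = Stmt3Aux.coef (N+1) h p * ((X 0 : MvPolynomial (Fin 2) ℤ)^2*(X 1 : MvPolynomial (Fin 2) ℤ))^(h+2*p)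
          * Stmt3Aux.FF ((X 0 : MvPolynomial (Fin 2) ℤ)^2)
            ((X 0 : MvPolynomial (Fin 2) ℤ)^2*(X 1 : MvPolynomial (Fin 2) ℤ)^2) (N-h-2*p) := by
    intro h p hc
    rw [Stmt3Aux.coef, Stmt3Aux.FF, Finset.mul_sum]
    refine Finset.sum_congr rfl fun l hl => ?_
    rw [Stmt3Aux.hh, Finset.mul_sum, Finset.mul_sum]
    refine Finset.sum_congr rfl fun r hr => ?_
    ring
  have hsum : ∀ h ∈ Finset.range (N+1), ∀ p ∈ Finset.range (N+1),
      (if h + 2*p ≤ N then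
        (∑ l ∈ Finset.range (N-h-2*p+1), ∑ r ∈ Finset.range (N-h-2*p-l+1),
          (2 : MvPolynomial (Fin 2) ℤ)^h * ((N+1).choose h : MvPolynomial (Fin 2) ℤ) *
            (((N+1) - h).choose p : MvPolynomial (Fin 2) ℤ) *
            (X 0 : MvPolynomial (Fin 2) ℤ)^(2*r + 2*(N-h-2*p-l-r) + 2*h + 4*p) *
            (X 1 : MvPolynomial (Fin 2) ℤ)^(2*(N-h-2*p-l-r) + h + 2*p) *
            (1 + (X 0 : MvPolynomial (Fin 2) ℤ)^(4*l) * (X 1 : MvPolynomial (Fin 2) ℤ)^(2*l) -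
              if l = 0 then 1 else 0))
        else 0)
      = (if h + 2*p ≤ N then
          Stmt3Aux.coef (N+1) h p * ((X 0 : MvPolynomial (Fin 2) ℤ)^2*(X 1 : MvPolynomial (Fin 2) ℤ))^(h+2*p)
            * Stmt3Aux.FF ((X 0 : MvPolynomial (Fin 2) ℤ)^2)
              ((X 0 : MvPolynomial (Fin 2) ℤ)^2*(X 1 : MvPolynomial (Fin 2) ℤ)^2) (N-h-2*p)
        else 0) := by
    intro h _ p _
    split_ifs with hc
    · exact inner h p hc
    · rfl
  rw [Finset.sum_congr rfl fun h hh => Finset.sum_congr rfl fun p hp => hsum h hh p hp]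
  exact Stmt3Aux.key (X 0) (X 1) N


end
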